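/- Let σ, θ ∈ (0,∞) and let m be the measure on ℝ given by m(du) = (2/σ²) du + (2/θ) δ₀(du). For h > 0 and y ∈ ℝ define â_h(y) = σ√h if |y| ≥ σ√h, and â_h(y) = σ·(√(h + |y|/θ + (σ/(2θ))²) − σ/(2θ)) if |y| < σ√h. Then for every h > 0 and every y ∈ ℝ, (1/2) ∫_ℝ (â_h(y) − |u − y|)⁺ m(du) = h. -/

import Mathlib

open MeasureTheory

/-- The speed measure of sticky Brownian motion:
`m(du) = (2/σ²) du + (2/θ) δ₀(du)`. -/
noncomputable def stickyMeasure (σ θ : ℝ) : Measure ℝ :=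
  ENNReal.ofReal (2 / σ^2) • (volume : Measure ℝ)
    + ENNReal.ofReal (2 / θ) • Measure.dirac 0


lemma tent_cont (a y : ℝ) : Continuous (fun u : ℝ => max (a - |u - y|) 0) := by
  fun_prop

lemma tent_integrable (a y : ℝ) : Integrable (fun u : ℝ => max (a - |u - y|) 0) volume := by
  apply Continuous.integrable_of_hasCompactSupport (tent_cont a y)
  apply HasCompactSupport.intro (isCompact_Icc (a := y - a) (b := y + a))
  intro u hu
  simp only [Set.mem_Icc, not_and_or, not_le] at hu
  have : a ≤ |u - y| := by
    rcases hu with h1 | h1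
    · rw [abs_sub_comm]; exact le_trans (by linarith) (le_abs_self _)
    · exact le_trans (by linarith) (le_abs_self _)
  simp [max_eq_right, this]

lemma tent_integral (a y : ℝ) (ha : 0 ≤ a) :
    ∫ u, max (a - |u - y|) 0 = a ^ 2 := by
  have hfun : (fun u : ℝ => max (a - |u - y|) 0)
      = Set.indicator (Set.Icc (y - a) (y + a)) (fun u => a - |u - y|) := by
    ext u
    by_cases hu : u ∈ Set.Icc (y - a) (y + a)
    · rw [Set.indicator_of_mem hu]
      obtain ⟨h1, h2⟩ := hu
      have : |u - y| ≤ a := abs_le.2 ⟨by linarith, by linarith⟩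
      exact max_eq_left (by linarith)
    · rw [Set.indicator_of_notMem hu]
      simp only [Set.mem_Icc, not_and_or, not_le] at hu
      have : a ≤ |u - y| := by
        rcases hu with h1 | h1
        · rw [abs_sub_comm]; exact le_trans (by linarith) (le_abs_self _)
        · exact le_trans (by linarith) (le_abs_self _)
      exact max_eq_right (by linarith)
  rw [hfun, integral_indicator measurableSet_Icc,
    MeasureTheory.integral_Icc_eq_integral_Ioc,
    ← intervalIntegral.integral_of_le (by linarith)]
  have hsub := intervalIntegral.integral_comp_sub_right
    (a := y - a) (b := y + a) (fun u => a - |u|) y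
  simp only [sub_sub_cancel_left, add_sub_cancel_left] at hsub
  rw [hsub]
  have hsplit := intervalIntegral.integral_add_adjacent_intervals
    (a := -a) (b := 0) (c := a) (f := fun u => a - |u|) (μ := volume)
    ((continuous_const.sub continuous_abs).intervalIntegrable _ _)
    ((continuous_const.sub continuous_abs).intervalIntegrable _ _)
  rw [← hsplit]
  have h1 : ∫ u in (-a)..0, (a - |u|) = ∫ u in (-a)..0, (a + u) := by
    apply intervalIntegral.integral_congr
    intro u hu
    rw [Set.uIcc_of_le (by linarith)] at hu
    obtain ⟨h1, h2⟩ := hu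
    show a - |u| = a + u
    rw [abs_of_nonpos h2]; ring
  have h2 : ∫ u in (0:ℝ)..a, (a - |u|) = ∫ u in (0:ℝ)..a, (a - u) := by
    apply intervalIntegral.integral_congr
    intro u hu
    rw [Set.uIcc_of_le (by linarith)] at hu
    obtain ⟨h1, h2⟩ := hu
    show a - |u| = a - u
    rw [abs_of_nonneg h1]
  rw [h1, h2]
  rw [intervalIntegral.integral_add (intervalIntegrable_const) intervalIntegral.intervalIntegrable_id,
    intervalIntegral.integral_sub (intervalIntegrable_const) intervalIntegral.intervalIntegrable_id,
    integral_id, integral_id,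
    intervalIntegral.integral_const, intervalIntegral.integral_const]
  simp only [smul_eq_mul]
  ring

theorem emcel_scale_factor_sticky_bm (σ θ : ℝ) (hσ : 0 < σ) (hθ : 0 < θ)
    (h : ℝ) (hh : 0 < h) (y : ℝ) (a : ℝ)
    (ha : a = if σ * Real.sqrt h ≤ |y| then σ * Real.sqrt h
      else σ * (Real.sqrt (h + |y| / θ + (σ / (2 * θ))^2) - σ / (2 * θ))) :
    (1 / 2) * ∫ u, max (a - |u - y|) 0 ∂(stickyMeasure σ θ) = h := by
  have hsh : 0 < Real.sqrt h := Real.sqrt_pos.2 hh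
  have hsq : Real.sqrt h ^ 2 = h := Real.sq_sqrt hh.le
  have hapos : 0 < a := by
    rw [ha]
    split_ifs with hc
    · positivity
    · have h1 : σ / (2 * θ) < Real.sqrt (h + |y| / θ + (σ / (2 * θ)) ^ 2) := by
        rw [show (σ / (2 * θ) < Real.sqrt (h + |y| / θ + (σ / (2 * θ)) ^ 2)) ↔ _ from
          Real.lt_sqrt (by positivity)]
        have : 0 ≤ |y| / θ := by positivity
        nlinarith
      nlinarith
  -- decompose the integral
  rw [stickyMeasure, integral_add_measure, integral_smul_measure, integral_smul_measure,
    integral_dirac, tent_integral a y hapos.le,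
    ENNReal.toReal_ofReal (by positivity), ENNReal.toReal_ofReal (by positivity)]
  · simp only [smul_eq_mul, zero_sub, abs_neg]
    rw [ha]
    split_ifs with hc
    · rw [max_eq_right (by nlinarith)]
      field_simp
      nlinarith
    · have hyc : |y| < σ * Real.sqrt h := not_le.1 hc
      have hs2 : Real.sqrt (h + |y| / θ + (σ / (2 * θ)) ^ 2) ^ 2
          = h + |y| / θ + (σ / (2 * θ)) ^ 2 := Real.sq_sqrt (by positivity)
      set s := Real.sqrt (h + |y| / θ + (σ / (2 * θ)) ^ 2) with hsdef
      have hsnn : 0 ≤ s := Real.sqrt_nonneg _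
      have hynn : 0 ≤ |y| := abs_nonneg y
      have hs2' : (2 * θ) ^ 2 * s ^ 2 = (2 * θ) ^ 2 * h + 4 * θ * |y| + σ ^ 2 := by
        field_simp at hs2
        nlinarith [hs2]
      have hy2 : |y| ^ 2 < σ ^ 2 * h := by nlinarith
      have hA2 : (σ * (2 * θ) * s) ^ 2
          = σ ^ 2 * ((2 * θ) ^ 2 * h + 4 * θ * |y| + σ ^ 2) := by
        calc (σ * (2 * θ) * s) ^ 2 = σ ^ 2 * ((2 * θ) ^ 2 * s ^ 2) := by ring
        _ = _ := by rw [hs2']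
      have hya : |y| ≤ σ * (s - σ / (2 * θ)) := by
        rw [show σ * (s - σ / (2 * θ)) = (σ * (2 * θ) * s - σ ^ 2) / (2 * θ) by
          field_simp]
        rw [le_div_iff₀ (by positivity)]
        nlinarith [hA2, hy2,
          mul_nonneg (mul_nonneg hσ.le (by linarith : (0:ℝ) ≤ 2 * θ)) hsnn]
      rw [max_eq_left (by linarith)]
      field_simp
      linear_combination hs2'
  · exact (tent_integrable a y).smul_measure ENNReal.ofReal_ne_top
  · refine (Integrable.smul_measure ?_ ENNReal.ofReal_ne_top)
    refine Integrable.mono' (integrable_const a) (tent_cont a y).aestronglyMeasurable ?_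
    filter_upwards with u
    rw [Real.norm_eq_abs, abs_of_nonneg (le_max_right _ _)]
    exact max_le (by linarith [abs_nonneg (u - y)]) hapos.le
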